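/- One-step convergence for isotropic quadratics: let N ≥ 2, d ≥ 1, c > 0, let f(θ) := (1/2)θᵀ(cI_d)θ, let Θ ∈ ℝ^{d×N}, and let G := cΘ be the matrix of gradients of f at the columns of Θ. If ΘᵀΘ ∘ L is invertible, then the Gradient Grouping update yields Θ + G·diag(η*) = 0, i.e. after a single update every one of the N parameter vectors equals the unique minimizer 0 of f. -/
import Mathlib

open Matrix

/-- The Laplacian of the complete graph on `N` vertices: `L = N·I − 𝟙𝟙ᵀ`. -/
noncomputable def ggL (N : ℕ) : Matrix (Fin N) (Fin N) ℝ :=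
  (N : ℝ) • (1 : Matrix (Fin N) (Fin N) ℝ) - Matrix.of fun _ _ => (1 : ℝ)

/-- One-step convergence for isotropic quadratics `f(θ) = (1/2)θᵀ(cI)θ`, `c > 0`:
with `G = cΘ` the matrix of gradients at the columns of `Θ`, if `ΘᵀΘ ∘ L` is
invertible then the Gradient Grouping update `Θ + G·diag(η*)`, with
`η* = −(GᵀG ∘ L)⁻¹ (GᵀΘ ∘ L)𝟙`, sends every parameter vector to the minimizer `0`. -/
theorem gg_one_step_convergence_isotropic {d N : ℕ} (hN : 2 ≤ N) (hd : 1 ≤ d)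
    (c : ℝ) (hc : 0 < c)
    (Θ : Matrix (Fin d) (Fin N) ℝ) (G : Matrix (Fin d) (Fin N) ℝ) (hG : G = c • Θ)
    (hinv : IsUnit ((Θᵀ * Θ) ⊙ ggL N)) :
    Θ + G * Matrix.diagonal
        ((-(((Gᵀ * G) ⊙ ggL N)⁻¹ * ((Gᵀ * Θ) ⊙ ggL N))) *ᵥ fun _ => (1 : ℝ)) = 0 := by
  set M := (Θᵀ * Θ) ⊙ ggL N with hM
  have hMdet : IsUnit M.det := (Matrix.isUnit_iff_isUnit_det M).mp hinv
  have h1 : (Gᵀ * G) ⊙ ggL N = (c * c) • M := by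
    rw [hG, Matrix.transpose_smul, Matrix.smul_mul, Matrix.mul_smul, smul_smul,
      Matrix.smul_hadamard]
  have h2 : (Gᵀ * Θ) ⊙ ggL N = c • M := by
    rw [hG, Matrix.transpose_smul, Matrix.smul_mul, Matrix.smul_hadamard]
  have hcc : Invertible (c * c) := invertibleOfNonzero (by positivity)
  have h3 : ((c * c) • M)⁻¹ = (c * c)⁻¹ • M⁻¹ := by
    rw [Matrix.inv_smul (A := M) (c * c) hMdet, invOf_eq_inv]
  have h4 : -(((Gᵀ * G) ⊙ ggL N)⁻¹ * ((Gᵀ * Θ) ⊙ ggL N)) = (-c⁻¹) • (1 : Matrix (Fin N) (Fin N) ℝ) := by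
    rw [h1, h2, h3, Matrix.smul_mul, Matrix.mul_smul, smul_smul,
      Matrix.nonsing_inv_mul M hMdet]
    rw [← neg_smul]
    congr 1
    field_simp
  rw [h4]
  have h5 : ((-c⁻¹) • (1 : Matrix (Fin N) (Fin N) ℝ)) *ᵥ (fun _ => (1 : ℝ))
      = fun _ => -c⁻¹ := by
    funext i
    simp [Matrix.neg_mulVec, Matrix.smul_mulVec, Matrix.one_mulVec]
  rw [h5]
  have h6 : Matrix.diagonal (fun _ : Fin N => -c⁻¹) = (-c⁻¹) • (1 : Matrix (Fin N) (Fin N) ℝ) := by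
    simp [Matrix.smul_eq_diagonal_mul]
  rw [h6, Matrix.mul_smul, Matrix.mul_one, hG, smul_smul]
  have : -c⁻¹ * c = -1 := by field_simp
  rw [this]
  simp
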